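/- For every real number d > 2√2 there exist three closed balls in Euclidean 3-space with centers on the prolate ellipsoid E_d = {p : (p 0)²/d² + (p 1)² + (p 2)² = 1}, pairwise non-overlapping (distance between centers at least the sum of radii), none containing the origin, which generate the shadow at the origin: every line through the origin intersects at least one of the three balls. -/

import Mathlib

open Metric

private lemma cover_aux (x y z c0 c1 c2 r : ℝ)
    (hV0 : 0 < x ^ 2 + y ^ 2 + z ^ 2)
    (h : (c0 ^ 2 + c1 ^ 2 + c2 ^ 2 - r ^ 2) * (x ^ 2 + y ^ 2 + z ^ 2)
        ≤ (x * c0 + y * c1 + z * c2) ^ 2) :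
    ∃ t : ℝ, (t * x - c0) ^ 2 + (t * y - c1) ^ 2 + (t * z - c2) ^ 2 ≤ r ^ 2 := by
  set V := x ^ 2 + y ^ 2 + z ^ 2 with hV
  set p := x * c0 + y * c1 + z * c2 with hp
  have hVne : V ≠ 0 := ne_of_gt hV0
  refine ⟨p / V, ?_⟩
  have key : (p / V * x - c0) ^ 2 + (p / V * y - c1) ^ 2 + (p / V * z - c2) ^ 2
      = (c0 ^ 2 + c1 ^ 2 + c2 ^ 2) - p ^ 2 / V := by
    field_simp
    ring
  rw [key]
  have h2 : c0 ^ 2 + c1 ^ 2 + c2 ^ 2 - r ^ 2 ≤ p ^ 2 / V := (le_div_iff₀ hV0).2 h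
  linarith

private lemma sqrt_le_of {a b : ℝ} (hb : 0 ≤ b) (hab : a ≤ b ^ 2) : Real.sqrt a ≤ b :=
  le_trans (Real.sqrt_le_sqrt hab) (le_of_eq (Real.sqrt_sq hb))

private lemma le_sqrt_of {a b : ℝ} (hb : 0 ≤ b) (hab : b ^ 2 ≤ a) : b ≤ Real.sqrt a :=
  le_trans (le_of_eq (Real.sqrt_sq hb).symm) (Real.sqrt_le_sqrt hab)

private lemma w_pows {w : ℝ} (hw0 : 0 < w) (hw1 : w < 1 / 10) :
    w ^ 2 < 1 / 100 ∧ w ^ 3 < w ^ 2 / 10 ∧ w ^ 4 < w ^ 2 / 100 ∧ 0 < w ^ 4 ∧ w ^ 8 < w ^ 4 := by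
  have h2 : w ^ 2 < 1 / 100 := by nlinarith
  have h4pos : 0 < w ^ 4 := by positivity
  refine ⟨h2, by nlinarith [sq_nonneg w],
    by nlinarith [mul_lt_mul_of_pos_left h2 (mul_pos hw0 hw0)], h4pos, ?_⟩
  nlinarith [h2, h4pos, pow_pos hw0 6]

private lemma Y_bounds {w : ℝ} (hw0 : 0 < w) (hw1 : w < 1 / 10) :
    Real.sqrt (1 - w ^ 2) ≤ 1 - w ^ 2 / 2 ∧
      1 - w ^ 2 / 2 - w ^ 4 / 2 ≤ Real.sqrt (1 - w ^ 2) := by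
  have h2 : w ^ 2 < 1 / 100 := by nlinarith
  have h4 : w ^ 4 < w ^ 2 / 100 := by
    nlinarith [mul_lt_mul_of_pos_left h2 (mul_pos hw0 hw0)]
  constructor
  · exact sqrt_le_of (by nlinarith) (by nlinarith)
  · exact le_sqrt_of (by nlinarith) (by nlinarith [pow_pos hw0 6, pow_pos hw0 8])

private lemma u_bounds {w Y : ℝ} (hw0 : 0 < w) (hw1 : w < 1 / 10)
    (hYub : Y ≤ 1 - w ^ 2 / 2) (hYlb : 1 - w ^ 2 / 2 - w ^ 4 / 2 ≤ Y) :
    Real.sqrt (2 + 2 * Y) ≤ 2 - w ^ 2 / 4 ∧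
      2 - w ^ 2 / 2 - w ^ 4 / 2 ≤ Real.sqrt (2 + 2 * Y) := by
  have h2 : w ^ 2 < 1 / 100 := by nlinarith
  have h4 : w ^ 4 < w ^ 2 / 100 := by
    nlinarith [mul_lt_mul_of_pos_left h2 (mul_pos hw0 hw0)]
  constructor
  · exact sqrt_le_of (by nlinarith) (by nlinarith [pow_pos hw0 4])
  · exact le_sqrt_of (by nlinarith) (by nlinarith [pow_pos hw0 4, pow_pos hw0 6, pow_pos hw0 8])

private lemma hc1_lemma {w Y u : ℝ} (hw0 : 0 < w) (hw1 : w < 1 / 10)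
    (hYlb : 1 - w ^ 2 / 2 - w ^ 4 / 2 ≤ Y) (hu2 : u ^ 2 = 2 + 2 * Y)
    (hu1 : 1 ≤ u) (huub : u ≤ 2 - w ^ 2 / 4) :
    1 - (u - 1 + w ^ 4) ^ 2 ≤ w ^ 2 / 2 + 3 * w ^ 4 := by
  have expand : 1 - (u - 1 + w ^ 4) ^ 2
      = 2 * u - 2 - 2 * Y + 2 * w ^ 4 - w ^ 8 - 2 * u * w ^ 4 := by
    linear_combination -hu2
  have huw : 2 * w ^ 4 - 2 * u * w ^ 4 ≤ 0 := by nlinarith [pow_pos hw0 4]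
  have hw8pos : 0 < w ^ 8 := pow_pos hw0 8
  have hw4pos : 0 < w ^ 4 := pow_pos hw0 4
  rw [expand]
  linarith

private lemma zero_coords {x y z : ℝ} (h : x ^ 2 + y ^ 2 + z ^ 2 ≤ 0) :
    x = 0 ∧ y = 0 ∧ z = 0 := by
  refine ⟨?_, ?_, ?_⟩ <;> nlinarith [sq_nonneg x, sq_nonneg y, sq_nonneg z]

set_option maxHeartbeats 1000000 in
private lemma covering_ineq {w Y x y z V : ℝ} (hw0 : 0 < w) (hw1 : w < 1 / 10)
    (hY2 : Y ^ 2 = 1 - w ^ 2) (hY0 : 0 ≤ Y) (hYle1 : Y ≤ 1)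
    (hV : V = x ^ 2 + y ^ 2 + z ^ 2) (hV0 : 0 < V)
    (hA : (y * Y + z * w) ^ 2 < (w ^ 2 / 2 + 3 * w ^ 4) * V)
    (hB : y ^ 2 < 2 * w ^ 4 * V)
    (hxx : x ^ 2 < (1 / 2 - 5 * w) * V) : False := by
  have hzb : w ^ 3 * z ^ 2 ≤ (w ^ 3 / 2 + 2 * w ^ 4 + 5 * w ^ 5 + 6 * w ^ 6) * V := by
    nlinarith [mul_nonneg hY0 (sq_nonneg (2 * w * (y * Y + z * w) + y)),
      mul_nonneg hY0 (sq_nonneg (2 * w * (y * Y + z * w) - y)),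
      mul_le_mul_of_nonneg_left hA.le hw0.le, hA.le, hB.le, hY2, hYle1, hY0, hw0, hw1,
      mul_nonneg (sub_nonneg.2 hYle1) (sq_nonneg y),
      mul_nonneg (mul_nonneg (sub_nonneg.2 hYle1) hY0) (sq_nonneg y),
      mul_le_mul_of_nonneg_left hB.le hw0.le, sq_nonneg y, sq_nonneg z, hV0.le]
  have hz2 : z ^ 2 ≤ (1 / 2 + 2 * w + 5 * w ^ 2 + 6 * w ^ 3) * V := by
    nlinarith [hzb, pow_pos hw0 3, hV0, sq_nonneg z]
  nlinarith [hxx, hz2, hB, hV0, hw0, hw1,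
    mul_pos hw0 hV0, mul_nonneg (mul_nonneg hw0.le hw0.le) hV0.le,
    mul_nonneg (mul_nonneg (mul_nonneg hw0.le hw0.le) hw0.le) hV0.le,
    mul_nonneg (mul_nonneg (mul_nonneg (mul_nonneg hw0.le hw0.le) hw0.le) hw0.le) hV0.le]

set_option maxHeartbeats 1000000 in
/-- For every `d > 2√2` there are three pairwise non-overlapping closed balls with
centers on the prolate ellipsoid with semi-axes `d, 1, 1`, none containing the origin,
which generate the shadow at the origin. -/
theorem shadow_three_closed_balls_of_ratio_gt
    (d : ℝ) (hd : 2 * Real.sqrt 2 < d) :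
    ∃ (a : Fin 3 → EuclideanSpace ℝ (Fin 3)) (r : Fin 3 → ℝ),
      (∀ i, (a i 0) ^ 2 / d ^ 2 + (a i 1) ^ 2 + (a i 2) ^ 2 = 1) ∧
      (∀ i, 0 < r i) ∧
      (∀ i j, i ≠ j → r i + r j ≤ dist (a i) (a j)) ∧
      (∀ i, (0 : EuclideanSpace ℝ (Fin 3)) ∉ Metric.closedBall (a i) (r i)) ∧
      (∀ v : EuclideanSpace ℝ (Fin 3), v ≠ 0 →
        ∃ (i : Fin 3) (t : ℝ), t • v ∈ Metric.closedBall (a i) (r i)) := by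
  -- distance formula in coordinates
  have dist3 : ∀ p q : EuclideanSpace ℝ (Fin 3),
      dist p q = Real.sqrt ((p 0 - q 0) ^ 2 + (p 1 - q 1) ^ 2 + (p 2 - q 2) ^ 2) := by
    intro p q
    rw [EuclideanSpace.dist_eq, Fin.sum_univ_three, Real.dist_eq, Real.dist_eq, Real.dist_eq,
      sq_abs, sq_abs, sq_abs]
  -- basic bounds on d
  have hs2 : Real.sqrt 2 ^ 2 = 2 := Real.sq_sqrt (by norm_num)
  have hs2pos : 0 < Real.sqrt 2 := Real.sqrt_pos.2 (by norm_num)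
  have hd0 : 0 < d := lt_trans (by positivity) hd
  have hd2 : 8 < d ^ 2 := by nlinarith [hs2, hs2pos, hd]
  clear hd hs2 hs2pos
  -- K = sqrt (d^2+1)
  set K := Real.sqrt (d ^ 2 + 1) with hK
  have hK2 : K ^ 2 = d ^ 2 + 1 := Real.sq_sqrt (by positivity)
  have hK0 : 0 < K := Real.sqrt_pos.2 (by positivity)
  clear_value K
  have hK1 : 1 < K := by nlinarith [hK2, hK0, hd2]
  have hKd : K < d + 1 := by
    by_contra hcon
    push_neg at hcon
    have h2 := mul_le_mul hcon hcon (by linarith) (le_trans (by linarith) hcon)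
    nlinarith [hK2, hd0]
  -- the small parameter
  set ε : ℝ := (d ^ 2 + 4 - 4 * K) / (2 * d ^ 2) with hε
  have hεpos : 0 < ε := by
    have h4K : 4 * K < d ^ 2 + 4 := by nlinarith [hK2, hK0, hd2]
    have h0 : 0 < d ^ 2 + 4 - 4 * K := by linarith
    positivity
  have hεlt : ε < 1 / 2 := by
    rw [hε, div_lt_iff₀ (by positivity)]
    nlinarith [hK1]
  set w : ℝ := ε / 5 with hwdef
  have hw0 : 0 < w := by positivity
  have hw1 : w < 1 / 10 := by rw [hwdef]; linarith
  have hKε : 2 * K - 2 = d ^ 2 * (1 / 2 - 5 * w) := by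
    rw [hwdef, hε]
    field_simp
    ring
  clear_value w
  clear hwdef hε hεpos hεlt
  obtain ⟨hw2, hw3, hw4, hw4pos, hw8⟩ := w_pows hw0 hw1
  -- Y = sqrt (1 - w^2)
  set Y := Real.sqrt (1 - w ^ 2) with hY
  have hY2 : Y ^ 2 = 1 - w ^ 2 := Real.sq_sqrt (by nlinarith)
  have hY0 : 0 ≤ Y := Real.sqrt_nonneg _
  obtain ⟨hYub, hYlb⟩ := Y_bounds hw0 hw1
  rw [← hY] at hYub hYlb
  clear_value Y
  have hYle1 : Y ≤ 1 := by nlinarith [hYub]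
  -- u = sqrt (2 + 2Y)
  set u := Real.sqrt (2 + 2 * Y) with hu
  have hu2 : u ^ 2 = 2 + 2 * Y := Real.sq_sqrt (by linarith)
  have hu0 : 0 ≤ u := Real.sqrt_nonneg _
  obtain ⟨huub, hulb⟩ := u_bounds hw0 hw1 hYub hYlb
  rw [← hu] at huub hulb
  clear_value u
  have hu1 : 1 ≤ u := by nlinarith [hulb, hw2, hw4]
  -- radii
  set r1 : ℝ := u - 1 + w ^ 4 with hr1
  set r2 : ℝ := 1 - w ^ 4 with hr2
  set r3 : ℝ := K - 1 with hr3
  clear_value r1 r2 r3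
  have hr1pos : 0 < r1 := by rw [hr1]; nlinarith [hulb, hw2, hw4, hw4pos]
  have hr2pos : 0 < r2 := by rw [hr2]; nlinarith [hw4, hw2]
  have hr3pos : 0 < r3 := by rw [hr3]; linarith
  have hr1lt : r1 < 1 := by rw [hr1]; linarith [huub, hw4, hw2]
  have hr2lt : r2 < 1 := by rw [hr2]; linarith [hw4pos]
  -- key coefficient bounds
  have hc1 : 1 - r1 ^ 2 ≤ w ^ 2 / 2 + 3 * w ^ 4 := by
    rw [hr1]; exact hc1_lemma hw0 hw1 hYlb hu2 hu1 huub
  have hc2 : 1 - r2 ^ 2 ≤ 2 * w ^ 4 := by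
    rw [hr2]
    have expand : 1 - (1 - w ^ 4) ^ 2 = 2 * w ^ 4 - w ^ 8 := by ring
    rw [expand]
    linarith [pow_pos hw0 8]
  have hc3 : d ^ 2 - r3 ^ 2 = 2 * K - 2 := by rw [hr3]; linear_combination -hK2
  refine ⟨![!₂[0, Y, w], !₂[0, -1, 0], !₂[d, 0, 0]], ![r1, r2, r3], ?_, ?_, ?_, ?_, ?_⟩
  · -- on the ellipsoid
    intro i
    fin_cases i
    · show (0 : ℝ) ^ 2 / d ^ 2 + Y ^ 2 + w ^ 2 = 1
      rw [hY2]; field_simp; ring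
    · show (0 : ℝ) ^ 2 / d ^ 2 + (-1 : ℝ) ^ 2 + (0 : ℝ) ^ 2 = 1
      field_simp; ring
    · show d ^ 2 / d ^ 2 + (0 : ℝ) ^ 2 + (0 : ℝ) ^ 2 = 1
      field_simp; ring
  · -- positive radii
    intro i
    fin_cases i
    · exact hr1pos
    · exact hr2pos
    · exact hr3pos
  · -- separation
    intro i j hij
    have e12 : Real.sqrt (((0:ℝ) - 0) ^ 2 + (Y - -1) ^ 2 + (w - 0) ^ 2) = u := by
      rw [hu]
      congr 1
      linear_combination hY2
    have e13 : Real.sqrt (((0:ℝ) - d) ^ 2 + (Y - 0) ^ 2 + (w - 0) ^ 2) = K := by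
      rw [hK]
      congr 1
      linear_combination hY2
    have e23 : Real.sqrt (((0:ℝ) - d) ^ 2 + ((-1:ℝ) - 0) ^ 2 + ((0:ℝ) - 0) ^ 2) = K := by
      rw [hK]
      congr 1
      ring
    have h12 : r1 + r2 ≤ u := by rw [hr1, hr2]; linarith
    have h13 : r1 + r3 ≤ K := by rw [hr1, hr3]; linarith [huub, hw4, hw2]
    have h23 : r2 + r3 ≤ K := by rw [hr2, hr3]; linarith [hw4pos]
    fin_cases i <;> fin_cases j <;> rw [dist3]
    · exact absurd rfl hij
    · show r1 + r2 ≤ Real.sqrt (((0:ℝ) - 0) ^ 2 + (Y - -1) ^ 2 + (w - 0) ^ 2)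
      rw [e12]; exact h12
    · show r1 + r3 ≤ Real.sqrt (((0:ℝ) - d) ^ 2 + (Y - 0) ^ 2 + (w - 0) ^ 2)
      rw [e13]; exact h13
    · show r2 + r1 ≤ Real.sqrt (((0:ℝ) - 0) ^ 2 + ((-1:ℝ) - Y) ^ 2 + ((0:ℝ) - w) ^ 2)
      rw [show ((0:ℝ) - 0) ^ 2 + ((-1:ℝ) - Y) ^ 2 + ((0:ℝ) - w) ^ 2
          = ((0:ℝ) - 0) ^ 2 + (Y - -1) ^ 2 + (w - 0) ^ 2 by ring, e12]
      linarith
    · exact absurd rfl hij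
    · show r2 + r3 ≤ Real.sqrt (((0:ℝ) - d) ^ 2 + ((-1:ℝ) - 0) ^ 2 + ((0:ℝ) - 0) ^ 2)
      rw [e23]; exact h23
    · show r3 + r1 ≤ Real.sqrt ((d - 0) ^ 2 + ((0:ℝ) - Y) ^ 2 + ((0:ℝ) - w) ^ 2)
      rw [show (d - 0) ^ 2 + ((0:ℝ) - Y) ^ 2 + ((0:ℝ) - w) ^ 2
          = ((0:ℝ) - d) ^ 2 + (Y - 0) ^ 2 + (w - 0) ^ 2 by ring, e13]
      linarith
    · show r3 + r2 ≤ Real.sqrt ((d - 0) ^ 2 + ((0:ℝ) - -1) ^ 2 + ((0:ℝ) - 0) ^ 2)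
      rw [show (d - 0) ^ 2 + ((0:ℝ) - -1) ^ 2 + ((0:ℝ) - 0) ^ 2
          = ((0:ℝ) - d) ^ 2 + ((-1:ℝ) - 0) ^ 2 + ((0:ℝ) - 0) ^ 2 by ring, e23]
      linarith
    · exact absurd rfl hij
  · -- origin not inside the balls
    intro i
    fin_cases i <;> rw [mem_closedBall, dist3, not_le]
    · show r1 < Real.sqrt (((0:ℝ) - 0) ^ 2 + ((0:ℝ) - Y) ^ 2 + ((0:ℝ) - w) ^ 2)
      rw [show ((0:ℝ) - 0) ^ 2 + ((0:ℝ) - Y) ^ 2 + ((0:ℝ) - w) ^ 2 = 1 by linear_combination hY2,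
        Real.sqrt_one]
      exact hr1lt
    · show r2 < Real.sqrt (((0:ℝ) - 0) ^ 2 + ((0:ℝ) - -1) ^ 2 + ((0:ℝ) - 0) ^ 2)
      rw [show ((0:ℝ) - 0) ^ 2 + ((0:ℝ) - -1) ^ 2 + ((0:ℝ) - 0) ^ 2 = 1 by ring,
        Real.sqrt_one]
      exact hr2lt
    · show r3 < Real.sqrt (((0:ℝ) - d) ^ 2 + ((0:ℝ) - 0) ^ 2 + ((0:ℝ) - 0) ^ 2)
      rw [show ((0:ℝ) - d) ^ 2 + ((0:ℝ) - 0) ^ 2 + ((0:ℝ) - 0) ^ 2 = d ^ 2 by ring,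
        Real.sqrt_sq hd0.le]
      rw [hr3]; linarith [hKd]
  · -- the shadow property
    intro v hv
    set x := (v 0 : ℝ) with hx
    set y := (v 1 : ℝ) with hy
    set z := (v 2 : ℝ) with hz
    have hV0 : 0 < x ^ 2 + y ^ 2 + z ^ 2 := by
      rcases lt_or_eq_of_le (by positivity : (0 : ℝ) ≤ x ^ 2 + y ^ 2 + z ^ 2) with h | h
      · exact h
      · exfalso
        apply hv
        obtain ⟨hx0, hy0, hz0⟩ := zero_coords (le_of_eq h.symm)
        ext j
        fin_cases j
        · exact hx0
        · exact hy0
        · exact hz0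
    set V := x ^ 2 + y ^ 2 + z ^ 2 with hV
    -- at least one of the three covering conditions holds
    have main : (1 - r1 ^ 2) * V ≤ (y * Y + z * w) ^ 2 ∨
        (1 - r2 ^ 2) * V ≤ y ^ 2 ∨ (d ^ 2 - r3 ^ 2) * V ≤ (x * d) ^ 2 := by
      by_contra hcon
      push_neg at hcon
      obtain ⟨h1, h2, h3⟩ := hcon
      have hA : (y * Y + z * w) ^ 2 < (w ^ 2 / 2 + 3 * w ^ 4) * V :=
        lt_of_lt_of_le h1 (mul_le_mul_of_nonneg_right hc1 hV0.le)
      have hB : y ^ 2 < 2 * w ^ 4 * V :=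
        lt_of_lt_of_le h2 (mul_le_mul_of_nonneg_right hc2 hV0.le)
      have hxx : x ^ 2 < (1 / 2 - 5 * w) * V := by
        have hmul : d ^ 2 * x ^ 2 < d ^ 2 * ((1 / 2 - 5 * w) * V) := by
          calc d ^ 2 * x ^ 2 = (x * d) ^ 2 := by ring
            _ < (d ^ 2 - r3 ^ 2) * V := h3
            _ = d ^ 2 * ((1 / 2 - 5 * w) * V) := by rw [hc3, hKε]; ring
        exact lt_of_mul_lt_mul_left hmul (by positivity)
      exact covering_ineq hw0 hw1 hY2 hY0 hYle1 hV hV0 hA hB hxx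
    -- turn a covering condition into a point of the ball on the line
    have ball_of : ∀ (c : EuclideanSpace ℝ (Fin 3)) (r : ℝ), 0 ≤ r →
        (((c 0) ^ 2 + (c 1) ^ 2 + (c 2) ^ 2 - r ^ 2) * V
          ≤ (x * c 0 + y * c 1 + z * c 2) ^ 2) →
        ∃ t : ℝ, t • v ∈ Metric.closedBall c r := by
      intro c c_r hr hcov
      obtain ⟨t, ht⟩ := cover_aux x y z (c 0) (c 1) (c 2) c_r hV0 hcov
      refine ⟨t, ?_⟩
      rw [mem_closedBall, dist3]
      show Real.sqrt ((t * x - c 0) ^ 2 + (t * y - c 1) ^ 2 + (t * z - c 2) ^ 2) ≤ c_r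
      exact sqrt_le_of hr ht
    rcases main with h | h | h
    · refine ⟨0, ball_of _ _ hr1pos.le ?_⟩
      show ((0 : ℝ) ^ 2 + Y ^ 2 + w ^ 2 - r1 ^ 2) * V ≤ (x * 0 + y * Y + z * w) ^ 2
      calc ((0 : ℝ) ^ 2 + Y ^ 2 + w ^ 2 - r1 ^ 2) * V = (1 - r1 ^ 2) * V := by
            rw [show (0 : ℝ) ^ 2 + Y ^ 2 + w ^ 2 = 1 by linear_combination hY2]
        _ ≤ (y * Y + z * w) ^ 2 := h
        _ = (x * 0 + y * Y + z * w) ^ 2 := by ring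
    · refine ⟨1, ball_of _ _ hr2pos.le ?_⟩
      show ((0 : ℝ) ^ 2 + (-1 : ℝ) ^ 2 + (0 : ℝ) ^ 2 - r2 ^ 2) * V
          ≤ (x * 0 + y * (-1) + z * 0) ^ 2
      calc ((0 : ℝ) ^ 2 + (-1 : ℝ) ^ 2 + (0 : ℝ) ^ 2 - r2 ^ 2) * V = (1 - r2 ^ 2) * V := by
            norm_num
        _ ≤ y ^ 2 := h
        _ = (x * 0 + y * (-1) + z * 0) ^ 2 := by ring
    · refine ⟨2, ball_of _ _ hr3pos.le ?_⟩
      show (d ^ 2 + (0 : ℝ) ^ 2 + (0 : ℝ) ^ 2 - r3 ^ 2) * V ≤ (x * d + y * 0 + z * 0) ^ 2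
      calc (d ^ 2 + (0 : ℝ) ^ 2 + (0 : ℝ) ^ 2 - r3 ^ 2) * V = (d ^ 2 - r3 ^ 2) * V := by ring
        _ ≤ (x * d) ^ 2 := h
        _ = (x * d + y * 0 + z * 0) ^ 2 := by ring
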